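/- For every nonnegative integer ν and every c ∈ ℂ with |c| < 1, the function (z,w) ↦ |w|^{2ν} · e^{π c z w − π(|z|² + |w|²)} is integrable over ℂ² and ∫_{ℂ²} |w|^{2ν} e^{π c z w − π(|z|² + |w|²)} dz dw = ν! / π^ν. -/

import Mathlib

open MeasureTheory

lemma transfer (f : ℂ → ℂ) :
    ∫ z : ℂ, f z = ∫ p : ℝ × ℝ, f (p.1 + p.2 * Complex.I) := by
  rw [← (Complex.volume_preserving_equiv_real_prod.symm).integral_comp
    Complex.measurableEquivRealProd.symm.measurableEmbedding f]
  congr 1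
  ext p
  rw [Complex.measurableEquivRealProd_symm_apply]
  congr 1
  exact (Complex.mk_eq_add_mul_I _ _)

lemma gauss_integrable {b : ℝ} (hb : 0 < b) :
    Integrable (fun z : ℂ => Real.exp (-b * ‖z‖ ^ 2)) := by
  rw [← (Complex.volume_preserving_equiv_real_prod.symm).integrable_comp_emb
    Complex.measurableEquivRealProd.symm.measurableEmbedding]
  have h : (fun z : ℂ => Real.exp (-b * ‖z‖ ^ 2)) ∘ Complex.measurableEquivRealProd.symm
      = fun p : ℝ × ℝ => Real.exp (-b * p.1 ^ 2) * Real.exp (-b * p.2 ^ 2) := by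
    ext p
    simp only [Function.comp_apply, Complex.measurableEquivRealProd_symm_apply]
    rw [← Real.exp_add, Complex.sq_norm, Complex.normSq_mk]
    ring_nf
  rw [h, Measure.volume_eq_prod]
  exact (integrable_exp_neg_mul_sq hb).mul_prod (integrable_exp_neg_mul_sq hb)

lemma gauss_integral (a : ℂ) :
    ∫ z : ℂ, Complex.exp (a * z - (Real.pi : ℂ) * (‖z‖ : ℂ) ^ 2) = 1 := by
  have hπ : ((-(Real.pi : ℂ))).re < 0 := by
    simp [Real.pi_pos]
  have hπ0 : (Real.pi : ℂ) ≠ 0 := by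
    exact_mod_cast Real.pi_ne_zero
  rw [transfer]
  have h : (fun p : ℝ × ℝ => Complex.exp (a * (p.1 + p.2 * Complex.I)
        - (Real.pi : ℂ) * (‖(p.1 + p.2 * Complex.I : ℂ)‖ : ℂ) ^ 2))
      = fun p : ℝ × ℝ => Complex.exp ((-(Real.pi : ℂ)) * (p.1:ℝ) ^ 2 + a * (p.1:ℝ) + 0) *
          Complex.exp ((-(Real.pi : ℂ)) * (p.2:ℝ) ^ 2 + (a * Complex.I) * (p.2:ℝ) + 0) := by
    ext p
    rw [← Complex.exp_add]
    congr 1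
    have habs : (‖((p.1:ℂ) + (p.2:ℂ) * Complex.I)‖ : ℂ) ^ 2
        = (p.1:ℂ) ^ 2 + (p.2:ℂ) ^ 2 := by
      rw [← Complex.ofReal_pow, Complex.sq_norm]
      push_cast [Complex.normSq_add_mul_I]
      ring
    rw [habs]
    ring
  rw [h, Measure.volume_eq_prod,
    integral_prod_mul (fun x : ℝ => Complex.exp ((-(Real.pi : ℂ)) * (x:ℝ) ^ 2 + a * (x:ℝ) + 0))
      (fun y : ℝ => Complex.exp ((-(Real.pi : ℂ)) * (y:ℝ) ^ 2 + (a * Complex.I) * (y:ℝ) + 0)),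
    integral_cexp_quadratic hπ, integral_cexp_quadratic hπ]
  rw [neg_neg, div_self hπ0, Complex.one_cpow, one_mul, one_mul, ← Complex.exp_add,
    ← Complex.exp_zero]
  congr 1
  have : (a * Complex.I) ^ 2 = -(a ^ 2) := by
    rw [mul_pow, Complex.I_sq]; ring
  rw [this]
  field_simp
  ring

lemma moment (ν : ℕ) :
    ∫ w : ℂ, ‖w‖ ^ (2 * ν) * Real.exp (-Real.pi * ‖w‖ ^ 2)
      = ν.factorial / Real.pi ^ ν := by
  have key := Complex.integral_rpow_mul_exp_neg_mul_rpow (p := 2) (q := (2 * ν : ℕ))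
    one_le_two (lt_of_lt_of_le (by norm_num) (Nat.cast_nonneg _)) Real.pi_pos
  have h1 : (fun x : ℂ => ‖x‖ ^ ((2 * ν : ℕ) : ℝ) * Real.exp (-Real.pi * ‖x‖ ^ (2:ℝ)))
      = fun w : ℂ => ‖w‖ ^ (2 * ν) * Real.exp (-Real.pi * ‖w‖ ^ 2) := by
    ext w
    rw [Real.rpow_natCast, Real.rpow_two]
  rw [h1] at key
  rw [key]
  have h2 : (((2 * ν : ℕ) : ℝ) + 2) / 2 = (ν : ℝ) + 1 := by push_cast; ring
  have h2' : -(((2 * ν : ℕ) : ℝ) + 2) / 2 = -((ν : ℝ) + 1) := by push_cast; ring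
  rw [h2, h2', Real.Gamma_nat_eq_factorial]
  have h3 : Real.pi ^ (-((ν:ℝ) + 1)) = (Real.pi ^ (ν + 1))⁻¹ := by
    rw [← Real.rpow_natCast Real.pi (ν+1), ← Real.rpow_neg Real.pi_pos.le]
    push_cast; ring_nf
  rw [h3]
  rw [eq_div_iff (by positivity)]
  field_simp [pow_succ]
  ring


/-- For every `ν : ℕ` and `c ∈ ℂ` with `|c| < 1`, the function
`(z,w) ↦ |w|^{2ν} e^{πczw − π(|z|²+|w|²)}` is integrable over `ℂ²` and its integral
equals `ν!/π^ν`. -/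
theorem stmt_5 (ν : ℕ) (c : ℂ) (hc : ‖c‖ < 1) :
    Integrable (fun p : ℂ × ℂ =>
      (‖p.2‖ : ℂ) ^ (2 * ν) * Complex.exp ((Real.pi : ℂ) * c * p.1 * p.2
        - (Real.pi : ℂ) * ((‖p.1‖ : ℂ) ^ 2 + (‖p.2‖ : ℂ) ^ 2))) ∧
    ∫ p : ℂ × ℂ, (‖p.2‖ : ℂ) ^ (2 * ν) *
        Complex.exp ((Real.pi : ℂ) * c * p.1 * p.2
          - (Real.pi : ℂ) * ((‖p.1‖ : ℂ) ^ 2 + (‖p.2‖ : ℂ) ^ 2))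
      = (ν.factorial : ℂ) / (Real.pi : ℂ) ^ ν := by
  set f : ℂ × ℂ → ℂ := fun p => (‖p.2‖ : ℂ) ^ (2 * ν) *
      Complex.exp ((Real.pi : ℂ) * c * p.1 * p.2
        - (Real.pi : ℂ) * ((‖p.1‖ : ℂ) ^ 2 + (‖p.2‖ : ℂ) ^ 2)) with hf
  have hcont : Continuous f := by
    apply Continuous.mul
    · exact (Complex.continuous_ofReal.comp (continuous_norm.comp continuous_snd)).pow _
    · apply Complex.continuous_exp.comp
      apply Continuous.sub
      · exact (continuous_const.mul continuous_fst).mul continuous_snd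
      · exact continuous_const.mul
          (((Complex.continuous_ofReal.comp (continuous_norm.comp continuous_fst)).pow _).add
           ((Complex.continuous_ofReal.comp (continuous_norm.comp continuous_snd)).pow _))
  set K : ℝ := (ν.factorial : ℝ) * (4 / Real.pi) ^ ν with hK
  set g : ℂ × ℂ → ℝ := fun p => K * (Real.exp (-(Real.pi / 2) * ‖p.1‖ ^ 2) *
      Real.exp (-(Real.pi / 4) * ‖p.2‖ ^ 2)) with hg
  have hgint : Integrable g := by
    rw [hg, Measure.volume_eq_prod]
    exact ((gauss_integrable (by positivity)).mul_prod (gauss_integrable (by positivity))).const_mul K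
  have hbound : ∀ p : ℂ × ℂ, ‖f p‖ ≤ g p := by
    rintro ⟨z, w⟩
    have hre : ((Real.pi : ℂ) * c * z * w
          - (Real.pi : ℂ) * ((‖z‖ : ℂ) ^ 2 + (‖w‖ : ℂ) ^ 2)).re
        ≤ Real.pi * ‖c‖ * ‖z‖ * ‖w‖
          - Real.pi * (‖z‖ ^ 2 + ‖w‖ ^ 2) := by
      have e1 : (Real.pi : ℂ) * ((‖z‖ : ℂ) ^ 2 + (‖w‖ : ℂ) ^ 2)
          = ((Real.pi * (‖z‖ ^ 2 + ‖w‖ ^ 2) : ℝ) : ℂ) := by push_cast; ring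
      rw [e1, Complex.sub_re, Complex.ofReal_re]
      have h4 : ((Real.pi : ℂ) * c * z * w).re
          ≤ Real.pi * ‖c‖ * ‖z‖ * ‖w‖ := by
        calc ((Real.pi : ℂ) * c * z * w).re ≤ ‖((Real.pi : ℂ) * c * z * w)‖ :=
              Complex.re_le_norm _
          _ = Real.pi * ‖c‖ * ‖z‖ * ‖w‖ := by
              simp [map_mul, Complex.norm_real, abs_of_pos Real.pi_pos]
      linarith
    have hnorm : ‖f (z, w)‖ = ‖w‖ ^ (2 * ν) *
        Real.exp (((Real.pi : ℂ) * c * z * w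
          - (Real.pi : ℂ) * ((‖z‖ : ℂ) ^ 2 + (‖w‖ : ℂ) ^ 2)).re) := by
      rw [hf]
      simp only [norm_mul, norm_pow, Complex.norm_exp, Complex.norm_real,
        abs_norm, norm_norm]
    have hpow : ‖w‖ ^ (2 * ν)
        ≤ K * Real.exp ((Real.pi / 4) * ‖w‖ ^ 2) := by
      have h5 := Real.pow_div_factorial_le_exp (x := (Real.pi / 4) * ‖w‖ ^ 2)
        (by positivity) ν
      have h6 : ‖w‖ ^ (2 * ν)
          = ((Real.pi / 4) * ‖w‖ ^ 2) ^ ν * (4 / Real.pi) ^ ν := by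
        rw [← mul_pow, pow_mul]
        congr 1
        field_simp
      rw [h6, hK]
      have h7 : ((Real.pi / 4) * ‖w‖ ^ 2) ^ ν
          ≤ (ν.factorial : ℝ) * Real.exp ((Real.pi / 4) * ‖w‖ ^ 2) := by
        rw [div_le_iff₀ (by positivity)] at h5
        linarith [h5]
      calc ((Real.pi / 4) * ‖w‖ ^ 2) ^ ν * (4 / Real.pi) ^ ν
          ≤ ((ν.factorial : ℝ) * Real.exp ((Real.pi / 4) * ‖w‖ ^ 2)) * (4 / Real.pi) ^ ν := by
            apply mul_le_mul_of_nonneg_right h7 (by positivity)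
        _ = (ν.factorial : ℝ) * (4 / Real.pi) ^ ν * Real.exp ((Real.pi / 4) * ‖w‖ ^ 2) := by
            ring
    have hexp : Real.exp (((Real.pi : ℂ) * c * z * w
          - (Real.pi : ℂ) * ((‖z‖ : ℂ) ^ 2 + (‖w‖ : ℂ) ^ 2)).re)
        ≤ Real.exp (-(Real.pi / 2) * ‖z‖ ^ 2 - (Real.pi / 2) * ‖w‖ ^ 2) := by
      apply Real.exp_le_exp.mpr
      have habs : ‖c‖ * (‖z‖ * ‖w‖)
          ≤ (‖z‖ ^ 2 + ‖w‖ ^ 2) / 2 := by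
        nlinarith [sq_nonneg (‖z‖ - ‖w‖), norm_nonneg z,
          norm_nonneg w, norm_nonneg c, hc,
          mul_nonneg (norm_nonneg z) (norm_nonneg w)]
      nlinarith [hre, Real.pi_pos, mul_le_mul_of_nonneg_left habs Real.pi_pos.le]
    calc ‖f (z, w)‖ ≤ (K * Real.exp ((Real.pi / 4) * ‖w‖ ^ 2)) *
          Real.exp (-(Real.pi / 2) * ‖z‖ ^ 2 - (Real.pi / 2) * ‖w‖ ^ 2) := by
          rw [hnorm]
          exact mul_le_mul hpow hexp (Real.exp_nonneg _) (by positivity)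
      _ = g (z, w) := by
          rw [hg]
          simp only [mul_assoc, ← Real.exp_add]
          congr 2
          ring
  have h1 : Integrable f := by
    apply hgint.mono hcont.aestronglyMeasurable
    filter_upwards with p
    calc ‖f p‖ ≤ g p := hbound p
      _ ≤ ‖g p‖ := le_abs_self _
  refine ⟨h1, ?_⟩
  have h1' : Integrable f ((volume : Measure ℂ).prod volume) := by
    rwa [← Measure.volume_eq_prod]
  have hfub : ∫ p : ℂ × ℂ, f p = ∫ w : ℂ, ∫ z : ℂ, f (z, w) := by
    rw [Measure.volume_eq_prod]
    exact integral_prod_symm f h1'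
  rw [hfub]
  have hinner : ∀ w : ℂ, (∫ z : ℂ, f (z, w))
      = (‖w‖ : ℂ) ^ (2 * ν) * Complex.exp (-(Real.pi : ℂ) * (‖w‖ : ℂ) ^ 2) := by
    intro w
    have hsplit : ∀ z : ℂ, f (z, w)
        = ((‖w‖ : ℂ) ^ (2 * ν) * Complex.exp (-(Real.pi : ℂ) * (‖w‖ : ℂ) ^ 2)) *
          Complex.exp (((Real.pi : ℂ) * c * w) * z - (Real.pi : ℂ) * (‖z‖ : ℂ) ^ 2) := by
      intro z
      rw [hf]
      simp only
      rw [mul_assoc ((‖w‖ : ℂ) ^ (2 * ν)), ← Complex.exp_add]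
      congr 2
      ring
    simp_rw [hsplit]
    rw [integral_const_mul, gauss_integral ((Real.pi : ℂ) * c * w), mul_one]
  simp_rw [hinner]
  have hcast : ∀ w : ℂ, (‖w‖ : ℂ) ^ (2 * ν) *
        Complex.exp (-(Real.pi : ℂ) * (‖w‖ : ℂ) ^ 2)
      = ((‖w‖ ^ (2 * ν) * Real.exp (-Real.pi * ‖w‖ ^ 2) : ℝ) : ℂ) := by
    intro w
    push_cast [Complex.ofReal_exp]
    ring_nf
  simp_rw [hcast]
  have hor : (∫ w : ℂ, ((‖w‖ ^ (2 * ν) * Real.exp (-Real.pi * ‖w‖ ^ 2) : ℝ) : ℂ))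
      = ((∫ w : ℂ, ‖w‖ ^ (2 * ν) * Real.exp (-Real.pi * ‖w‖ ^ 2) : ℝ) : ℂ) :=
    integral_ofReal
  rw [hor, moment ν]
  push_cast
  ring
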